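/- Consider the simplified RDN system τ·dR_i/dt = −R_i + (β·R_i + I_i)/(η + G) for i = 1,…,N and τ·dG/dt = −G + ∑_{j=1}^N R_j, with τ > 0, η > 0, β > 0 and inputs I_i > 0 for all i. Let (R*, G*) be its unique equilibrium with G* > 0, given by G* = ((β − η) + √((η − β)² + 4T))/2 and R_i* = 2I_i/((η − β) + √((η − β)² + 4T)) with T = ∑_{j=1}^N I_j. Then every eigenvalue of the Jacobian matrix of the vector field at (R*, G*) has strictly negative real part. -/

import Mathlib

/-- The vector field of the simplified RDN system with inputs on
`(R_1, …, R_N, G)`: `dR_i/dt = (-R_i + (β R_i + I_i)/(η + G))/τ`,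
`dG/dt = (-G + ∑_j R_j)/τ`. -/
noncomputable def rdnFieldI (N : ℕ) (τ β η : ℝ) (I : Fin N → ℝ)
    (x : (Fin N ⊕ Unit) → ℝ) : (Fin N ⊕ Unit) → ℝ :=
  fun i => match i with
  | Sum.inl i =>
      (-x (Sum.inl i) + (β * x (Sum.inl i) + I i) / (η + x (Sum.inr ()))) / τ
  | Sum.inr _ => (-x (Sum.inr ()) + ∑ j, x (Sum.inl j)) / τ

/-- The Jacobian matrix of `F` at `p`: the matrix of partial derivatives of
the components of `F` with respect to the coordinates. -/
noncomputable def jacobian {n : Type*} [Fintype n] [DecidableEq n]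
    (F : (n → ℝ) → n → ℝ) (p : n → ℝ) : Matrix n n ℝ :=
  Matrix.of fun i j => fderiv ℝ (fun x => F x i) p (Pi.single j 1)

/-- `μ` is an eigenvalue of the complex matrix `M`. -/
def IsEigenvalue {n : Type*} [Fintype n] [DecidableEq n]
    (M : Matrix n n ℂ) (μ : ℂ) : Prop :=
  ∃ x : n → ℂ, x ≠ 0 ∧ M.mulVec x = μ • x

open ContinuousLinearMap in
lemma jac_row_inl (N : ℕ) (τ β η : ℝ) (I : Fin N → ℝ) (p : (Fin N ⊕ Unit) → ℝ)
    (hD : η + p (Sum.inr ()) ≠ 0) (i : Fin N) (k : Fin N ⊕ Unit) :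
    jacobian (rdnFieldI N τ β η I) p (Sum.inl i) k =
      match k with
      | Sum.inl j => if i = j then (-1 + β / (η + p (Sum.inr ()))) / τ else 0
      | Sum.inr _ => -((β * p (Sum.inl i) + I i) / ((η + p (Sum.inr ())) ^ 2 * τ)) := by
  have hu := hasFDerivAt_apply (𝕜 := ℝ) (F' := fun _ : Fin N ⊕ Unit => ℝ) (Sum.inl i) p
  have hw := hasFDerivAt_apply (𝕜 := ℝ) (F' := fun _ : Fin N ⊕ Unit => ℝ) (Sum.inr ()) p
  have hnum := (hu.const_mul β).add_const (I i)
  have hden := hw.const_add η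
  have hinv := (hasFDerivAt_inv hD).comp p hden
  have hprod := hnum.mul hinv
  have htot := (hu.neg.add hprod).mul_const τ⁻¹
  have h2 : fderiv ℝ (fun x => rdnFieldI N τ β η I x (Sum.inl i)) p = _ := htot.fderiv
  rw [jacobian, Matrix.of_apply, h2]
  match k with
  | Sum.inl j =>
      simp [Pi.single_apply, div_eq_mul_inv]
      split <;> ring
  | Sum.inr _ =>
      simp [Pi.single_apply, div_eq_mul_inv]
      ring

open ContinuousLinearMap in
lemma jac_row_inr (N : ℕ) (τ β η : ℝ) (I : Fin N → ℝ) (p : (Fin N ⊕ Unit) → ℝ)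
    (k : Fin N ⊕ Unit) :
    jacobian (rdnFieldI N τ β η I) p (Sum.inr ()) k =
      match k with
      | Sum.inl _ => 1 / τ
      | Sum.inr _ => -(1 / τ) := by
  have hw := hasFDerivAt_apply (𝕜 := ℝ) (F' := fun _ : Fin N ⊕ Unit => ℝ) (Sum.inr ()) p
  have hsumd : HasFDerivAt (fun x : (Fin N ⊕ Unit) → ℝ => ∑ j, x (Sum.inl j))
      (∑ j : Fin N, (proj (Sum.inl j) : ((Fin N ⊕ Unit) → ℝ) →L[ℝ] ℝ)) p :=
    HasFDerivAt.fun_sum fun j _ =>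
      hasFDerivAt_apply (𝕜 := ℝ) (F' := fun _ : Fin N ⊕ Unit => ℝ) (Sum.inl j) p
  have htot := (hw.neg.add hsumd).mul_const τ⁻¹
  have h2 : fderiv ℝ (fun x => rdnFieldI N τ β η I x (Sum.inr ())) p = _ := htot.fderiv
  rw [jacobian, Matrix.of_apply, h2]
  match k with
  | Sum.inl j =>
      simp [Pi.single_apply, div_eq_mul_inv, Finset.sum_ite_eq]
  | Sum.inr _ =>
      simp [Pi.single_apply, div_eq_mul_inv]

lemma quad_aux (τ a C : ℝ) (hτ : 0 < τ) (ha : a < 0) (hC : C ≤ 0) (μ : ℂ)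
    (h : (μ - (a : ℂ)) * ((τ : ℂ) * μ + 1) = (C : ℂ)) : μ.re < 0 := by
  have hre := congrArg Complex.re h
  have him := congrArg Complex.im h
  simp [Complex.mul_re, Complex.mul_im, Complex.add_re, Complex.add_im,
    Complex.sub_re, Complex.sub_im, Complex.ofReal_re, Complex.ofReal_im] at hre him
  have him' : μ.im * (2 * τ * μ.re + 1 - τ * a) = 0 := by linear_combination him
  rcases mul_eq_zero.mp him' with hv0 | hfac
  · rw [hv0] at hre
    by_contra hge
    push_neg at hge
    nlinarith [mul_nonneg (mul_nonneg hτ.le hge) hge,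
      mul_nonneg (mul_nonneg hτ.le (neg_nonneg.2 ha.le)) hge]
  · by_contra hge
    push_neg at hge
    nlinarith [mul_neg_of_pos_of_neg hτ ha, mul_nonneg hτ.le hge]

/-- At the unique positive-`G` equilibrium of the simplified RDN system with
positive inputs, every eigenvalue of the Jacobian has strictly negative real
part. -/
theorem rdn_equilibrium_is_attractor (N : ℕ) (τ β η : ℝ) (I : Fin N → ℝ)
    (hτ : 0 < τ) (hη : 0 < η) (hβ : 0 < β) (hI : ∀ i, 0 < I i)
    (p : (Fin N ⊕ Unit) → ℝ)
    (hG : p (Sum.inr ()) =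
      ((β - η) + Real.sqrt ((η - β) ^ 2 + 4 * ∑ j, I j)) / 2)
    (hR : ∀ i, p (Sum.inl i) =
      2 * I i / ((η - β) + Real.sqrt ((η - β) ^ 2 + 4 * ∑ j, I j))) :
    ∀ μ : ℂ,
      IsEigenvalue ((jacobian (rdnFieldI N τ β η I) p).map Complex.ofReal) μ →
        μ.re < 0 := by
  intro μ hμ
  obtain ⟨x, hx0, hxeq⟩ := hμ
  set T : ℝ := ∑ j, I j with hT
  set s : ℝ := Real.sqrt ((η - β) ^ 2 + 4 * T) with hs
  have hT0 : 0 ≤ T := Finset.sum_nonneg fun j _ => (hI j).le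
  have hs0 : 0 ≤ s := Real.sqrt_nonneg _
  have hs2 : s ^ 2 = (η - β) ^ 2 + 4 * T := Real.sq_sqrt (by positivity)
  have hsge : η - β ≤ s := by nlinarith
  have hDpos : 0 < η + p (Sum.inr ()) := by rw [hG]; linarith
  set D : ℝ := η + p (Sum.inr ()) with hDdef
  have hD : D ≠ 0 := ne_of_gt hDpos
  -- key positivity facts when N > 0
  have hβηs : N ≠ 0 → β - η < s := by
    intro hN
    have : 0 < T := Finset.sum_pos (fun j _ => hI j)
      (Finset.univ_nonempty_iff.mpr (Fin.pos_iff_nonempty.mp (Nat.pos_of_ne_zero hN)))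
    nlinarith
  set A : ℝ := (-1 + β / D) / τ with hA
  set c : Fin N → ℝ := fun i => -((β * p (Sum.inl i) + I i) / (D ^ 2 * τ)) with hc
  have hAneg : N ≠ 0 → A < 0 := by
    intro hN
    have h1 : β < D := by
      rw [hDdef, hG]
      have := hβηs hN
      linarith
    have : β / D < 1 := (div_lt_one hDpos).mpr h1
    rw [hA]
    apply div_neg_of_neg_of_pos _ hτ
    linarith
  have hcneg : N ≠ 0 → ∀ i, c i ≤ 0 := by
    intro hN i
    have hden : 0 < (η - β) + s := by have := hβηs hN; linarith
    have hRpos : 0 < p (Sum.inl i) := by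
      rw [hR i]
      exact div_pos (by have := hI i; linarith) hden
    rw [hc]
    have : 0 < β * p (Sum.inl i) + I i := by nlinarith [hI i]
    simp only [neg_nonpos]
    positivity
  -- extract the eigen-equations
  set y : ℂ := x (Sum.inr ()) with hy
  have hτC : (τ : ℂ) ≠ 0 := Complex.ofReal_ne_zero.mpr (ne_of_gt hτ)
  have EqG : (∑ j, x (Sum.inl j)) = ((τ : ℂ) * μ + 1) * y := by
    have h := congrFun hxeq (Sum.inr ())
    simp only [Matrix.mulVec, dotProduct, Fintype.sum_sum_type,
      Matrix.map_apply, Pi.smul_apply, smul_eq_mul] at h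
    simp only [jac_row_inr N τ β η I p] at h
    simp only [Finset.univ_unique, Finset.sum_singleton,
      show (default : Unit) = () from rfl] at h
    push_cast at h
    rw [← Finset.mul_sum] at h
    rw [hy]
    field_simp at h
    linear_combination h
  have EqI : ∀ i, ((A : ℂ) - μ) * x (Sum.inl i) = -(c i : ℂ) * y := by
    intro i
    have h := congrFun hxeq (Sum.inl i)
    simp only [Matrix.mulVec, dotProduct, Fintype.sum_sum_type,
      Matrix.map_apply, Pi.smul_apply, smul_eq_mul] at h
    simp only [jac_row_inl N τ β η I p hD i] at h
    simp only [Finset.univ_unique, Finset.sum_singleton, apply_ite Complex.ofReal,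
      Complex.ofReal_zero, ite_mul, zero_mul, Finset.sum_ite_eq, Finset.mem_univ,
      if_true, show (default : Unit) = () from rfl] at h
    rw [hA, hc, hy, hDdef]
    push_cast at h ⊢
    linear_combination h
  by_cases hy0 : y = 0
  · -- eigenvector has zero G-component
    obtain ⟨k, hk⟩ := Function.ne_iff.mp hx0
    match k with
    | Sum.inr () => exact absurd hy0 hk
    | Sum.inl i =>
      have h := EqI i
      rw [hy0, mul_zero] at h
      have hμA : μ = (A : ℂ) := by
        have := mul_eq_zero.mp h
        rcases this with h' | h'
        · linear_combination -h'
        · exact absurd h' hk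
      rw [hμA, Complex.ofReal_re]
      exact hAneg (by exact fun h0 => (Fin.elim0 (h0 ▸ i))) 
  · -- eigenvector has nonzero G-component
    have hsumEq : ((A : ℂ) - μ) * (∑ j, x (Sum.inl j)) = -(∑ i, (c i : ℂ)) * y := by
      rw [Finset.mul_sum]
      rw [show -(∑ i, (c i : ℂ)) * y = ∑ i, -(c i : ℂ) * y by
        rw [← Finset.sum_mul, Finset.sum_neg_distrib]]
      exact Finset.sum_congr rfl fun i _ => EqI i
    rw [EqG] at hsumEq
    rcases Nat.eq_zero_or_pos N with hN0 | hNpos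
    · -- N = 0 : μ = -1/τ
      have hsum0 : (∑ j, x (Sum.inl j)) = 0 := by
        have : IsEmpty (Fin N) := by rw [hN0]; infer_instance
        simp
      rw [hsum0] at EqG
      have : (τ : ℂ) * μ + 1 = 0 := by
        rcases mul_eq_zero.mp EqG.symm with h' | h'
        · exact h'
        · exact absurd h' hy0
      have hτC : (τ : ℂ) ≠ 0 := Complex.ofReal_ne_zero.mpr (ne_of_gt hτ)
      have hμ : μ = ((-(1 / τ) : ℝ) : ℂ) := by
        push_cast
        field_simp at this ⊢
        linear_combination this
      rw [hμ, Complex.ofReal_re]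
      have : 0 < 1 / τ := by positivity
      linarith
    · have hN : N ≠ 0 := Nat.pos_iff_ne_zero.mp hNpos
      have hquad : (μ - (A : ℂ)) * ((τ : ℂ) * μ + 1) = ((∑ i, c i : ℝ) : ℂ) := by
        apply mul_right_cancel₀ hy0
        push_cast
        linear_combination -hsumEq
      exact quad_aux τ A (∑ i, c i) hτ (hAneg hN)
        (Finset.sum_nonpos fun i _ => hcneg hN i) μ hquad
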